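/- The rewriting system Γ(p) on words over the alphabet {x_i^{±1} : i ∈ ℕ} is terminating: there is no infinite sequence of words w_0, w_1, w_2, … in which each w_{k+1} is obtained from w_k by applying one rewriting rule of Γ(p) to a subword. Equivalently, the one-step rewriting relation of Γ(p) is well-founded. -/

import Mathlib

/-- A letter `x_i^ε` is encoded as a pair `(i, ε)` with `ε : Bool`
(`true` = exponent `+1`, `false` = exponent `-1`). The rewriting rules of the
system `Γ(p)`:
1. `x_i^ε x_i^{-ε} → 1`;
2. `x_j^ε x_i → x_i x_{j+p-1}^ε` for `j > i`;
3. `x_{j+p-1}^ε x_i⁻¹ → x_i⁻¹ x_j^ε` for `j > i`. -/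
inductive GammaRule (p : ℕ) : List (ℕ × Bool) → List (ℕ × Bool) → Prop
  | cancel (i : ℕ) (ε : Bool) : GammaRule p [(i, ε), (i, !ε)] []
  | pos (i j : ℕ) (ε : Bool) (h : i < j) :
      GammaRule p [(j, ε), (i, true)] [(i, true), (j + p - 1, ε)]
  | neg (i j : ℕ) (ε : Bool) (h : i < j) :
      GammaRule p [(j + p - 1, ε), (i, false)] [(i, false), (j, ε)]

/-- One-step rewriting: replace an occurrence of the left-hand side of a rule
by the corresponding right-hand side. -/
def GammaStep (p : ℕ) (w w' : List (ℕ × Bool)) : Prop :=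
  ∃ u v l r, GammaRule p l r ∧ w = u ++ l ++ v ∧ w' = u ++ r ++ v

open Ordinal in
/-- Ordinal measure: length first, then lexicographic on the index sequence. -/
noncomputable def gammaMu : List (ℕ × Bool) → Ordinal.{0}
  | [] => 0
  | a :: w => omega0 ^ (w.length : Ordinal) * (a.1 + 1) + gammaMu w

open Ordinal

lemma gammaMu_cons (a : ℕ × Bool) (w : List (ℕ × Bool)) :
    gammaMu (a :: w) = omega0 ^ (w.length : Ordinal) * ((a.1 : Ordinal) + 1) + gammaMu w := rfl

lemma gammaMu_lt (w : List (ℕ × Bool)) : gammaMu w < omega0 ^ (w.length : Ordinal) := by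
  induction w with
  | nil => simp [gammaMu]
  | cons a w ih =>
    set m : Ordinal := (w.length : Ordinal) with hm
    have h1 : gammaMu (a :: w) < omega0 ^ m * ((a.1 : Ordinal) + 1) + omega0 ^ m :=
      add_lt_add_right ih _
    have h2 : omega0 ^ m * ((a.1 : Ordinal) + 1) + omega0 ^ m
        = omega0 ^ m * (((a.1 : Ordinal) + 1) + 1) :=
      (mul_add_one _ _).symm
    have h3 : omega0 ^ m * (((a.1 : Ordinal) + 1) + 1) ≤ omega0 ^ m * omega0 := by
      refine mul_le_mul_right (le_of_lt ?_) _
      have := nat_lt_omega0 (a.1 + 2); push_cast at this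
      rwa [add_assoc, one_add_one_eq_two]
    have h4 : omega0 ^ m * omega0 = omega0 ^ ((m : Ordinal) + 1) := by
      rw [← opow_succ]; rfl
    have h5 : ((a :: w).length : Ordinal) = m + 1 := by
      simp [hm]
    rw [h5]
    exact lt_of_lt_of_le h1 (by rw [h2, ← h4] at *; exact h3)

lemma gammaMu_append_lt {x y : List (ℕ × Bool)} (u : List (ℕ × Bool))
    (hlen : y.length ≤ x.length) (h : gammaMu y < gammaMu x) :
    gammaMu (u ++ y) < gammaMu (u ++ x) := by
  induction u with
  | nil => simpa using h
  | cons a u ih =>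
    have hlen' : (u ++ y).length ≤ (u ++ x).length := by simp [hlen]
    have h' := ih
    calc gammaMu (a :: (u ++ y))
        = omega0 ^ ((u ++ y).length : Ordinal) * ((a.1 : Ordinal) + 1) + gammaMu (u ++ y) :=
          gammaMu_cons a _
      _ < omega0 ^ ((u ++ y).length : Ordinal) * ((a.1 : Ordinal) + 1) + gammaMu (u ++ x) :=
          add_lt_add_right h' _
      _ ≤ omega0 ^ ((u ++ x).length : Ordinal) * ((a.1 : Ordinal) + 1) + gammaMu (u ++ x) := by
          refine add_le_add_left (mul_le_mul_left ?_ _) _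
          exact opow_le_opow_right omega0_pos (by exact_mod_cast hlen')
      _ = gammaMu (a :: (u ++ x)) := (gammaMu_cons a _).symm

/-- A swap `[(J,ε),(i,ε')] → [(i,ε'),(J',ε'')]` with `i < J` decreases the measure. -/
lemma gammaMu_swap (J i J' : ℕ) (ε ε' ε'' : Bool) (hJ : i < J) (v : List (ℕ × Bool)) :
    gammaMu ([(i, ε'), (J', ε'')] ++ v) < gammaMu ([(J, ε), (i, ε')] ++ v) := by
  have hm1 : (((J', ε'') :: v).length : Ordinal) = (v.length : Ordinal) + 1 := by simp
  have hm1' : (((i, ε') :: v).length : Ordinal) = (v.length : Ordinal) + 1 := by simp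
  set m : Ordinal := (v.length : Ordinal) with hm
  have htail : gammaMu ((J', ε'') :: v) < omega0 ^ (m + 1) := by
    have := gammaMu_lt ((J', ε'') :: v); rwa [hm1] at this
  calc gammaMu ([(i, ε'), (J', ε'')] ++ v)
      = omega0 ^ (m + 1) * ((i : Ordinal) + 1) + gammaMu ((J', ε'') :: v) := by
        rw [show ([(i, ε'), (J', ε'')] ++ v) = (i, ε') :: ((J', ε'') :: v) from rfl,
          gammaMu_cons (i, ε') ((J', ε'') :: v), hm1]
    _ < omega0 ^ (m + 1) * ((i : Ordinal) + 1) + omega0 ^ (m + 1) := add_lt_add_right htail _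
    _ = omega0 ^ (m + 1) * (((i : Ordinal) + 1) + 1) := (mul_add_one _ _).symm
    _ ≤ omega0 ^ (m + 1) * ((J : Ordinal) + 1) := by
        refine mul_le_mul_right ?_ _
        have : (i : Ordinal) + 1 ≤ (J : Ordinal) := by exact_mod_cast hJ
        exact add_le_add_left this 1
    _ ≤ omega0 ^ (m + 1) * ((J : Ordinal) + 1) + gammaMu ((i, ε') :: v) := le_self_add
    _ = gammaMu ([(J, ε), (i, ε')] ++ v) := by
        rw [show ([(J, ε), (i, ε')] ++ v) = (J, ε) :: ((i, ε') :: v) from rfl,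
          gammaMu_cons (J, ε) ((i, ε') :: v), hm1']

lemma gammaMu_rule {p : ℕ} (hp : 2 ≤ p) {l r : List (ℕ × Bool)} (h : GammaRule p l r) (v : List (ℕ × Bool)) :
    gammaMu (r ++ v) < gammaMu (l ++ v) ∧ (r ++ v).length ≤ (l ++ v).length := by
  cases h with
  | cancel i ε =>
    constructor
    · have h1 : gammaMu v < omega0 ^ ((v.length : Ordinal)) := gammaMu_lt v
      have h2 : omega0 ^ ((v.length : Ordinal)) < omega0 ^ ((v.length : Ordinal) + 1) :=
        (opow_lt_opow_iff_right one_lt_omega0).2 (lt_add_one _)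
      have h3 : omega0 ^ ((v.length : Ordinal) + 1)
          ≤ omega0 ^ ((v.length : Ordinal) + 1) * ((i : Ordinal) + 1) :=
        Ordinal.le_mul_left _ (lt_of_lt_of_le zero_lt_one le_add_self)
      have h4 : omega0 ^ ((v.length : Ordinal) + 1) * ((i : Ordinal) + 1)
          ≤ gammaMu ([(i, ε), (i, !ε)] ++ v) := by
        rw [show ([(i, ε), (i, !ε)] ++ v) = (i, ε) :: ((i, !ε) :: v) from rfl, gammaMu_cons]
        have : (((i, !ε) :: v).length : Ordinal) = (v.length : Ordinal) + 1 := by simp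
        rw [this]
        exact le_self_add
      have : gammaMu (([] : List (ℕ × Bool)) ++ v) = gammaMu v := by simp
      rw [this]
      exact lt_of_lt_of_le (lt_of_lt_of_le h1 (le_of_lt h2)) (le_trans h3 h4)
    · simp
      omega
  | pos i j ε hij =>
    exact ⟨gammaMu_swap j i (j + p - 1) ε true ε hij v, by simp⟩
  | neg i j ε hij =>
    exact ⟨gammaMu_swap (j + p - 1) i j ε false ε (lt_of_lt_of_le hij (by omega)) v, by simp⟩

lemma gammaMu_step {p : ℕ} (hp : 2 ≤ p) {w w' : List (ℕ × Bool)} (h : GammaStep p w w') :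
    gammaMu w' < gammaMu w := by
  obtain ⟨u, v, l, r, hrule, hw, hw'⟩ := h
  subst hw hw'
  obtain ⟨hlt, hlen⟩ := gammaMu_rule hp hrule v
  rw [List.append_assoc, List.append_assoc]
  exact gammaMu_append_lt u hlen hlt

/-- The rewriting system `Γ(p)` is terminating: the one-step rewriting
relation (viewed from the result towards the source) is well-founded, i.e.
there is no infinite sequence of one-step rewritings. -/
theorem stmt1 (p : ℕ) (hp : 2 ≤ p) :
    WellFounded (fun w' w : List (ℕ × Bool) => GammaStep p w w') := by
  have wf : WellFounded (InvImage (· < ·) gammaMu) :=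
    InvImage.wf gammaMu Ordinal.lt_wf
  exact Subrelation.wf (fun h => gammaMu_step hp h) wf
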